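/- Let 𝒳 ⊆ ℝ^p be compact, let L_ξ, L_c, L_α ≥ 0, and let ξ : 𝒳 → ℝ, c : 𝒳 → (0,∞) and α : 𝒳 × [1,∞) → ℝ satisfy: ξ(x) > 0 for all x ∈ 𝒳; for each x the map t ↦ α_x(t)/t is integrable on [1,T] for every T ≥ 1 and α_x(t) → 0 as t → ∞; and for all x, y ∈ 𝒳: |ξ(x) − ξ(y)| ≤ L_ξ‖x − y‖₂, |log c(x) − log c(y)| ≤ L_c‖x − y‖₂, sup_{t ≥ 1} |α_x(t) − α_y(t)| ≤ L_α‖x − y‖₂. Define Q_x(T) = T^{ξ(x)} · c(x) · exp(∫_1^T α_x(t)/t dt). Then inf_{x ∈ 𝒳} Q_x(T) → ∞ as T → ∞. -/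

import Mathlib

open MeasureTheory Real

/-- Uniform divergence of the conditional quantile function over a compact
predictor space: `inf_{x ∈ 𝒳} Q_x(T) → ∞` as `T → ∞`. -/
theorem quantile_uniformly_unbounded {p : ℕ}
    (𝒳 : Set (EuclideanSpace ℝ (Fin p))) (hcomp : IsCompact 𝒳)
    (Lξ Lc Lα : ℝ) (hLξ : 0 ≤ Lξ) (hLc : 0 ≤ Lc) (hLα : 0 ≤ Lα)
    (ξ : EuclideanSpace ℝ (Fin p) → ℝ)
    (c : EuclideanSpace ℝ (Fin p) → ℝ)
    (α : EuclideanSpace ℝ (Fin p) → ℝ → ℝ)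
    (hξpos : ∀ x ∈ 𝒳, 0 < ξ x)
    (hc : ∀ x ∈ 𝒳, 0 < c x)
    (hint : ∀ x ∈ 𝒳, ∀ T : ℝ, 1 ≤ T →
      IntervalIntegrable (fun t => α x t / t) volume 1 T)
    (hαlim : ∀ x ∈ 𝒳, Filter.Tendsto (fun t => α x t) Filter.atTop (nhds 0))
    (hξ : ∀ x ∈ 𝒳, ∀ y ∈ 𝒳, |ξ x - ξ y| ≤ Lξ * ‖x - y‖)
    (hlogc : ∀ x ∈ 𝒳, ∀ y ∈ 𝒳, |Real.log (c x) - Real.log (c y)| ≤ Lc * ‖x - y‖)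
    (hα : ∀ x ∈ 𝒳, ∀ y ∈ 𝒳, ∀ t : ℝ, 1 ≤ t → |α x t - α y t| ≤ Lα * ‖x - y‖)
    (Q : EuclideanSpace ℝ (Fin p) → ℝ → ℝ)
    (hQ : ∀ x ∈ 𝒳, ∀ T : ℝ, 1 ≤ T →
      Q x T = T ^ (ξ x) * c x * Real.exp (∫ t in (1:ℝ)..T, α x t / t)) :
    ∀ M : ℝ, ∃ T₀ : ℝ, ∀ T : ℝ, T₀ ≤ T → ∀ x ∈ 𝒳, M ≤ Q x T := by

  intro M
  rcases 𝒳.eq_empty_or_nonempty with h𝒳 | hne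
  · exact ⟨1, fun T _ x hx => absurd hx (by simp [h𝒳])⟩
  -- minimum of ξ on 𝒳
  have hξcont : ContinuousOn ξ 𝒳 := by
    refine (LipschitzOnWith.of_dist_le_mul (K := Real.toNNReal Lξ)
      (f := ξ) (s := 𝒳) ?_).continuousOn
    intro x hx y hy
    rw [Real.coe_toNNReal _ hLξ, Real.dist_eq, dist_eq_norm]
    exact hξ x hx y hy
  obtain ⟨x₀, hx₀, hmin⟩ := hcomp.exists_isMinOn hne hξcont
  set ξ₀ := ξ x₀ with hξ₀def
  have hξ₀ : 0 < ξ₀ := hξpos x₀ hx₀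
  have hminle : ∀ x ∈ 𝒳, ξ₀ ≤ ξ x := fun x hx => hmin hx
  -- minimum of log ∘ c on 𝒳
  have hccont : ContinuousOn (fun x => Real.log (c x)) 𝒳 := by
    refine (LipschitzOnWith.of_dist_le_mul (K := Real.toNNReal Lc)
      (f := fun x => Real.log (c x)) (s := 𝒳) ?_).continuousOn
    intro x hx y hy
    rw [Real.coe_toNNReal _ hLc, Real.dist_eq, dist_eq_norm]
    exact hlogc x hx y hy
  obtain ⟨y₀, hy₀, hcmin⟩ := hcomp.exists_isMinOn hne hccont
  set ℓ := Real.log (c y₀) with hℓdef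
  have hcl : ∀ x ∈ 𝒳, Real.exp ℓ ≤ c x := by
    intro x hx
    rw [← Real.exp_log (hc x hx)]
    exact Real.exp_le_exp.mpr (hcmin hx)
  -- finite subcover
  set ε := ξ₀ / (4 * (Lα + 1)) with hεdef
  have hεpos : 0 < ε := by positivity
  obtain ⟨s, hsub, hsfin, hcov⟩ := hcomp.elim_finite_subcover_image
    (b := 𝒳) (c := fun i => Metric.ball i ε)
    (fun i _ => Metric.isOpen_ball)
    (fun x hx => Set.mem_iUnion₂.mpr ⟨x, hx, Metric.mem_ball_self hεpos⟩)
  -- eventual smallness of α, uniformly on s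
  have hev : ∀ᶠ t in Filter.atTop, ∀ i ∈ s, |α i t| ≤ ξ₀ / 4 := by
    rw [Filter.eventually_all_finite hsfin]
    intro i hi
    have habs : Filter.Tendsto (fun t => |α i t|) Filter.atTop (nhds 0) := by
      have := (hαlim i (hsub hi)).abs
      simpa using this
    exact (habs.eventually_lt_const (by positivity)).mono fun t ht => le_of_lt ht
  obtain ⟨t₁, ht₁⟩ := Filter.eventually_atTop.mp hev
  set tstar := max t₁ 1 with htsdef
  have hts1 : (1:ℝ) ≤ tstar := le_max_right _ _
  have htspos : (0:ℝ) < tstar := lt_of_lt_of_le one_pos hts1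
  have hLαε : Lα * ε ≤ ξ₀ / 4 := by
    have heq : Lα * ε = Lα * ξ₀ / (4 * (Lα + 1)) := by rw [hεdef]; ring
    rw [heq, div_le_div_iff₀ (by positivity) (by norm_num : (0:ℝ) < 4)]
    nlinarith [hξ₀.le]
  have hαsmall : ∀ x ∈ 𝒳, ∀ t : ℝ, tstar ≤ t → |α x t| ≤ ξ₀ / 2 := by
    intro x hx t ht
    obtain ⟨i, hi, hxi⟩ := Set.mem_iUnion₂.mp (hcov hx)
    have ht1 : (1:ℝ) ≤ t := le_trans hts1 ht
    have hdist : ‖x - i‖ ≤ ε := by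
      rw [← dist_eq_norm]; exact le_of_lt hxi
    have h1 : |α x t - α i t| ≤ Lα * ε :=
      le_trans (hα x hx i (hsub hi) t ht1) (mul_le_mul_of_nonneg_left hdist hLα)
    have h2 : |α i t| ≤ ξ₀ / 4 := ht₁ t (le_trans (le_max_left _ _) ht) i hi
    calc |α x t| = |(α x t - α i t) + α i t| := by ring_nf
      _ ≤ |α x t - α i t| + |α i t| := abs_add_le _ _
      _ ≤ Lα * ε + ξ₀ / 4 := add_le_add h1 h2
      _ ≤ ξ₀ / 4 + ξ₀ / 4 := add_le_add_left hLαε _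
      _ = ξ₀ / 2 := by ring
  -- uniform lower bound for the head integral
  obtain ⟨C, hC⟩ : ∃ C : ℝ, ∀ i ∈ s, C ≤ ∫ t in (1:ℝ)..tstar, α i t / t := by
    obtain ⟨C, hC⟩ := (hsfin.image (fun i => ∫ t in (1:ℝ)..tstar, α i t / t)).bddBelow
    exact ⟨C, fun i hi => hC (Set.mem_image_of_mem _ hi)⟩
  have hconstint : IntervalIntegrable (fun t => Lα * ε / t) MeasureTheory.volume 1 tstar := by
    apply ContinuousOn.intervalIntegrable
    apply ContinuousOn.div continuousOn_const continuousOn_id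
    intro t htmem
    rw [Set.uIcc_of_le hts1] at htmem
    exact ne_of_gt (lt_of_lt_of_le one_pos htmem.1)
  have hconstval : (∫ t in (1:ℝ)..tstar, Lα * ε / t) = Lα * ε * Real.log tstar := by
    have h0 : (0:ℝ) ∉ Set.uIcc 1 tstar := by
      rw [Set.uIcc_of_le hts1]
      intro hmem
      exact absurd hmem.1 (by norm_num)
    calc (∫ t in (1:ℝ)..tstar, Lα * ε / t) = ∫ t in (1:ℝ)..tstar, Lα * ε * (1 / t) := by
          simp only [mul_one_div]
      _ = Lα * ε * ∫ t in (1:ℝ)..tstar, 1 / t := intervalIntegral.integral_const_mul _ _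
      _ = Lα * ε * Real.log tstar := by rw [integral_one_div h0, div_one]
  set D := C - Lα * ε * Real.log tstar with hDdef
  have hIlow : ∀ x ∈ 𝒳, D ≤ ∫ t in (1:ℝ)..tstar, α x t / t := by
    intro x hx
    obtain ⟨i, hi, hxi⟩ := Set.mem_iUnion₂.mp (hcov hx)
    have hdist : ‖x - i‖ ≤ ε := by rw [← dist_eq_norm]; exact le_of_lt hxi
    have hfx := hint x hx tstar hts1
    have hfi := hint i (hsub hi) tstar hts1
    have hdiff : IntervalIntegrable (fun t => α x t / t - α i t / t)
        MeasureTheory.volume 1 tstar := hfx.sub hfi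
    have key : |∫ t in (1:ℝ)..tstar, (α x t / t - α i t / t)| ≤ Lα * ε * Real.log tstar := by
      calc |∫ t in (1:ℝ)..tstar, (α x t / t - α i t / t)|
          ≤ ∫ t in (1:ℝ)..tstar, |α x t / t - α i t / t| :=
            intervalIntegral.abs_integral_le_integral_abs hts1
        _ ≤ ∫ t in (1:ℝ)..tstar, Lα * ε / t := by
            apply intervalIntegral.integral_mono_on hts1 hdiff.abs hconstint
            intro t htmem
            have htpos : 0 < t := lt_of_lt_of_le one_pos htmem.1
            rw [div_sub_div_same, abs_div, abs_of_pos htpos]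
            exact div_le_div_of_nonneg_right (le_trans (hα x hx i (hsub hi) t htmem.1)
              (mul_le_mul_of_nonneg_left hdist hLα)) htpos.le
        _ = Lα * ε * Real.log tstar := hconstval
    have hsplit : (∫ t in (1:ℝ)..tstar, (α x t / t - α i t / t))
        = (∫ t in (1:ℝ)..tstar, α x t / t) - ∫ t in (1:ℝ)..tstar, α i t / t :=
      intervalIntegral.integral_sub hfx hfi
    rw [hsplit] at key
    have habs := neg_abs_le ((∫ t in (1:ℝ)..tstar, α x t / t) - ∫ t in (1:ℝ)..tstar, α i t / t)
    have hCi := hC i hi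
    rw [hDdef]
    linarith [key, habs]
  -- tail integral bound
  have hItail : ∀ x ∈ 𝒳, ∀ T : ℝ, tstar ≤ T →
      -(ξ₀ / 2) * (Real.log T - Real.log tstar) ≤ ∫ t in tstar..T, α x t / t := by
    intro x hx T hT
    have hT1 : (1:ℝ) ≤ T := le_trans hts1 hT
    have hTpos : (0:ℝ) < T := lt_of_lt_of_le one_pos hT1
    have hsubset : Set.uIcc tstar T ⊆ Set.uIcc 1 T := by
      rw [Set.uIcc_of_le hT, Set.uIcc_of_le hT1]
      exact Set.Icc_subset_Icc hts1 le_rfl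
    have htail_int : IntervalIntegrable (fun t => α x t / t) MeasureTheory.volume tstar T :=
      (hint x hx T hT1).mono_set hsubset
    have hlb_int : IntervalIntegrable (fun t => -(ξ₀ / 2) / t) MeasureTheory.volume tstar T := by
      apply ContinuousOn.intervalIntegrable
      apply ContinuousOn.div continuousOn_const continuousOn_id
      intro t htmem
      rw [Set.uIcc_of_le hT] at htmem
      exact ne_of_gt (lt_of_lt_of_le htspos htmem.1)
    have hmono : (∫ t in tstar..T, -(ξ₀ / 2) / t) ≤ ∫ t in tstar..T, α x t / t := by
      apply intervalIntegral.integral_mono_on hT hlb_int htail_int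
      intro t htmem
      have htpos : 0 < t := lt_of_lt_of_le htspos htmem.1
      have hsm := hαsmall x hx t htmem.1
      have : -(ξ₀ / 2) ≤ α x t := by
        have := neg_abs_le (α x t)
        linarith
      exact div_le_div_of_nonneg_right this htpos.le
    have h0 : (0:ℝ) ∉ Set.uIcc tstar T := by
      rw [Set.uIcc_of_le hT]
      intro hmem
      exact absurd hmem.1 (not_le.mpr htspos)
    have hval : (∫ t in tstar..T, -(ξ₀ / 2) / t)
        = -(ξ₀ / 2) * (Real.log T - Real.log tstar) := by
      calc (∫ t in tstar..T, -(ξ₀ / 2) / t) = ∫ t in tstar..T, -(ξ₀ / 2) * (1 / t) := by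
            simp only [mul_one_div]
        _ = -(ξ₀ / 2) * ∫ t in tstar..T, 1 / t := intervalIntegral.integral_const_mul _ _
        _ = -(ξ₀ / 2) * (Real.log T - Real.log tstar) := by
            rw [integral_one_div h0, Real.log_div (ne_of_gt hTpos) (ne_of_gt htspos)]
    linarith [hmono, hval.ge]
  -- combined integral lower bound
  have hI : ∀ x ∈ 𝒳, ∀ T : ℝ, tstar ≤ T →
      D - (ξ₀ / 2) * Real.log T ≤ ∫ t in (1:ℝ)..T, α x t / t := by
    intro x hx T hT
    have hT1 : (1:ℝ) ≤ T := le_trans hts1 hT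
    have hsubset : Set.uIcc tstar T ⊆ Set.uIcc 1 T := by
      rw [Set.uIcc_of_le hT, Set.uIcc_of_le hT1]
      exact Set.Icc_subset_Icc hts1 le_rfl
    have h1 := hint x hx tstar hts1
    have h2 : IntervalIntegrable (fun t => α x t / t) MeasureTheory.volume tstar T :=
      (hint x hx T hT1).mono_set hsubset
    have hsplit := intervalIntegral.integral_add_adjacent_intervals h1 h2
    have hlogts : 0 ≤ Real.log tstar := Real.log_nonneg hts1
    have := hIlow x hx
    have := hItail x hx T hT
    nlinarith [hξ₀.le]
  -- choose T₀
  set K := Real.exp (ℓ + D) with hKdef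
  have hK : 0 < K := Real.exp_pos _
  have hten : Filter.Tendsto (fun T : ℝ => K * T ^ (ξ₀ / 2)) Filter.atTop Filter.atTop :=
    (tendsto_rpow_atTop (by positivity)).const_mul_atTop hK
  obtain ⟨T₁, hT₁⟩ := Filter.eventually_atTop.mp (hten.eventually_ge_atTop M)
  refine ⟨max T₁ tstar, fun T hT x hx => ?_⟩
  have hTt : tstar ≤ T := le_trans (le_max_right _ _) hT
  have hT1 : (1:ℝ) ≤ T := le_trans hts1 hTt
  have hTpos : (0:ℝ) < T := lt_of_lt_of_le one_pos hT1
  rw [hQ x hx T hT1]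
  have hM : M ≤ K * T ^ (ξ₀ / 2) := hT₁ T (le_trans (le_max_left _ _) hT)
  refine le_trans hM ?_
  -- K * T^(ξ₀/2) ≤ T^(ξ x) * c x * exp(∫ ...)
  have hrw : K * T ^ (ξ₀ / 2)
      = T ^ ξ₀ * Real.exp ℓ * Real.exp (D - (ξ₀ / 2) * Real.log T) := by
    have h1 : T ^ (ξ₀ / 2) = T ^ ξ₀ * T ^ (-(ξ₀ / 2)) := by
      rw [← Real.rpow_add hTpos]; ring_nf
    have h2 : T ^ (-(ξ₀ / 2)) = Real.exp (-((ξ₀ / 2) * Real.log T)) := by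
      rw [Real.rpow_def_of_pos hTpos]; ring_nf
    have h3 : ℓ + D + -(ξ₀ / 2 * Real.log T) = ℓ + (D - ξ₀ / 2 * Real.log T) := by ring
    calc K * T ^ (ξ₀ / 2)
        = T ^ ξ₀ * (Real.exp (ℓ + D) * Real.exp (-(ξ₀ / 2 * Real.log T))) := by
          rw [hKdef, h1, h2]; ring
      _ = T ^ ξ₀ * Real.exp (ℓ + (D - ξ₀ / 2 * Real.log T)) := by
          rw [← Real.exp_add, h3]
      _ = T ^ ξ₀ * Real.exp ℓ * Real.exp (D - ξ₀ / 2 * Real.log T) := by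
          rw [Real.exp_add]; ring
  rw [hrw]
  have hexp1 : T ^ ξ₀ ≤ T ^ ξ x := Real.rpow_le_rpow_of_exponent_le hT1 (hminle x hx)
  have hexp3 : Real.exp (D - (ξ₀ / 2) * Real.log T)
      ≤ Real.exp (∫ t in (1:ℝ)..T, α x t / t) := by
    apply Real.exp_le_exp.mpr
    have := hI x hx T hTt
    linarith
  have hTξpos : (0:ℝ) < T ^ ξ₀ := Real.rpow_pos_of_pos hTpos _
  apply mul_le_mul
  · exact mul_le_mul hexp1 (hcl x hx) (Real.exp_pos _).le (Real.rpow_pos_of_pos hTpos _).le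
  · exact hexp3
  · exact (Real.exp_pos _).le
  · exact (mul_pos (Real.rpow_pos_of_pos hTpos _) (hc x hx)).le
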